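/- Soundness of the biclique reduction: let G = (V ∪ W, E) be a simple bipartite graph with parts V and W, let n = |V| + |W| ≥ 2, let r be an integer with 1 ≤ r ≤ n, and set ε = 1/(2n^8) and ρ = 2rnε. If there exists μ ∈ Δ_{V∪W} such that the value of the network security game on G with parameter ρ satisfies val(μ) ≥ 1 − (2n+2)ε, then G contains a complete bipartite subgraph K_{r,r}, i.e., there exist V'' ⊆ V and W'' ⊆ W with |V''| ≥ r, |W''| ≥ r, and every vertex of V'' adjacent to every vertex of W''. -/

import Mathlib

open Finset

/-- The value of the network security game on a graph with adjacency matrix `B`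
and parameter `ρ`, at posterior `μ`:
`val(μ) = max_{x ∈ Δ_V} ( xᵀBμ - ρ·max_v (x_v + μ_v) )`. -/
noncomputable def nsVal (V : Type*) [Fintype V] (B : Matrix V V ℝ) (ρ : ℝ)
    (μ : V → ℝ) : ℝ :=
  sSup {t : ℝ | ∃ x ∈ stdSimplex ℝ V,
    t = (∑ v : V, ∑ w : V, x v * B v w * μ w) - ρ * ⨆ v : V, (x v + μ v)}

lemma biclique_extract {ν : Type*} [Fintype ν] [DecidableEq ν] (G : SimpleGraph ν)
    [DecidableRel G.Adj]
    (V₀ W₀ : Finset ν) (n r : ℕ) (hn : Fintype.card ν ≤ n)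
    (x μ : ν → ℝ) (hx0 : ∀ v, 0 ≤ x v) (hx1 : ∑ v, x v = 1)
    (hμ0 : ∀ v, 0 ≤ μ v) (hμ1 : ∑ v, μ v = 1)
    (δ' M T : ℝ) (hT : 0 < T) (hMpos : 0 < M)
    (hM : ∀ v, x v + μ v ≤ M)
    (hxV : 1 - 2*δ' ≤ ∑ v ∈ V₀, x v)
    (hμW : 1 - 2*δ' ≤ ∑ v ∈ W₀, μ v)
    (hP : 1 - δ' ≤ ∑ u, ∑ w, x u * (if G.Adj u w then (1:ℝ) else 0) * μ w)
    (hc1 : ((r:ℝ)-1) * M < 1 - 2*δ' - n*T)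
    (hc2 : ((r:ℝ)-1) * M < 1 - 2*δ' - δ'/T) :
    ∃ A B : Finset ν, A ⊆ V₀ ∧ B ⊆ W₀ ∧ r ≤ A.card ∧ r ≤ B.card ∧
      ∀ u ∈ A, ∀ v ∈ B, G.Adj u v := by
  -- generic counting principle
  have count : ∀ (C : Finset ν) (f : ν → ℝ), (∀ v ∈ C, f v ≤ M) →
      ((r:ℝ)-1)*M < ∑ v ∈ C, f v → r ≤ C.card := by
    intro C f hfM hlt
    have h1 : ∑ v ∈ C, f v ≤ (C.card : ℝ) * M := by
      calc ∑ v ∈ C, f v ≤ ∑ _v ∈ C, M := Finset.sum_le_sum hfM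
      _ = (C.card : ℝ) * M := by simp [Finset.sum_const, nsmul_eq_mul]
    have h2 : ((r:ℝ)-1) < (C.card : ℝ) := by
      by_contra h
      push_neg at h
      have h3 : (C.card:ℝ)*M ≤ ((r:ℝ)-1)*M := mul_le_mul_of_nonneg_right h hMpos.le
      linarith only [h1, hlt, h3]
    have : (r : ℝ) < (C.card : ℝ) + 1 := by linarith
    exact_mod_cast Nat.lt_add_one_iff.mp (by exact_mod_cast this)
  set B'' : Finset ν := W₀.filter (fun w => T ≤ μ w) with hB''
  have hμB : 1 - 2*δ' - n*T ≤ ∑ w ∈ B'', μ w := by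
    have hsplit := Finset.sum_filter_add_sum_filter_not W₀ (fun w => T ≤ μ w) μ
    have hsmall : ∑ w ∈ W₀.filter (fun w => ¬ T ≤ μ w), μ w ≤ (n:ℝ) * T := by
      have h1 : ∑ w ∈ W₀.filter (fun w => ¬ T ≤ μ w), μ w ≤
          ∑ _w ∈ W₀.filter (fun w => ¬ T ≤ μ w), T := by
        refine Finset.sum_le_sum ?_
        intro i hi
        exact le_of_lt (lt_of_not_ge (Finset.mem_filter.mp hi).2)
      have h2 : ((W₀.filter (fun w => ¬ T ≤ μ w)).card : ℝ) ≤ (n : ℝ) := by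
        exact_mod_cast le_trans (Finset.card_le_univ _) hn
      calc ∑ w ∈ W₀.filter (fun w => ¬ T ≤ μ w), μ w ≤ _ := h1
        _ = ((W₀.filter (fun w => ¬ T ≤ μ w)).card : ℝ) * T := by
            simp [Finset.sum_const, nsmul_eq_mul]
        _ ≤ (n:ℝ) * T := mul_le_mul_of_nonneg_right h2 hT.le
    linarith
  have hcardB : r ≤ B''.card := by
    refine count B'' μ (fun v _ => le_trans (le_add_of_nonneg_left (hx0 v)) (hM v)) ?_
    linarith
  set A'' : Finset ν := V₀.filter (fun u => ∀ w ∈ B'', G.Adj u w) with hA''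
  set S : Finset ν := V₀.filter (fun u => ¬ ∀ w ∈ B'', G.Adj u w) with hS
  have hd1 : ∀ u : ν, ∑ w, (if G.Adj u w then (1:ℝ) else 0) * μ w ≤ 1 := by
    intro u
    calc ∑ w, (if G.Adj u w then (1:ℝ) else 0) * μ w ≤ ∑ w, μ w := by
          refine Finset.sum_le_sum fun w _ => ?_
          by_cases h : G.Adj u w <;> simp [h, hμ0 w]
      _ = 1 := hμ1
  have hd2 : ∀ u ∈ S, ∑ w, (if G.Adj u w then (1:ℝ) else 0) * μ w ≤ 1 - T := by
    intro u hu
    obtain ⟨-, hu2⟩ := Finset.mem_filter.mp hu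
    push_neg at hu2
    obtain ⟨w₀, hw₀, hnadj⟩ := hu2
    have hTw₀ : T ≤ μ w₀ := (Finset.mem_filter.mp hw₀).2
    have hsum : ∑ w, (if G.Adj u w then (1:ℝ) else 0) * μ w
        = ∑ w ∈ Finset.univ.erase w₀, (if G.Adj u w then (1:ℝ) else 0) * μ w := by
      rw [← Finset.add_sum_erase _ _ (Finset.mem_univ w₀)]
      simp [hnadj]
    rw [hsum]
    calc ∑ w ∈ Finset.univ.erase w₀, (if G.Adj u w then (1:ℝ) else 0) * μ w
        ≤ ∑ w ∈ Finset.univ.erase w₀, μ w := by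
          refine Finset.sum_le_sum fun w _ => ?_
          by_cases h : G.Adj u w <;> simp [h, hμ0 w]
      _ = (∑ w, μ w) - μ w₀ := Finset.sum_erase_eq_sub (Finset.mem_univ w₀)
      _ ≤ 1 - T := by rw [hμ1]; linarith
  have hPle : (∑ u, ∑ w, x u * (if G.Adj u w then (1:ℝ) else 0) * μ w)
      ≤ 1 - T * ∑ u ∈ S, x u := by
    have hstep : ∀ u : ν, ∑ w, x u * (if G.Adj u w then (1:ℝ) else 0) * μ w
        ≤ x u * (if u ∈ S then 1 - T else 1) := by
      intro u
      have hre : ∑ w, x u * (if G.Adj u w then (1:ℝ) else 0) * μ w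
          = x u * ∑ w, (if G.Adj u w then (1:ℝ) else 0) * μ w := by
        rw [Finset.mul_sum]; exact Finset.sum_congr rfl fun w _ => by ring
      rw [hre]
      by_cases h : u ∈ S
      · simp only [h, if_true]
        exact mul_le_mul_of_nonneg_left (hd2 u h) (hx0 u)
      · simp only [h, if_false]
        exact le_trans (mul_le_mul_of_nonneg_left (hd1 u) (hx0 u)) (by rw [mul_one])
    calc ∑ u, ∑ w, x u * (if G.Adj u w then (1:ℝ) else 0) * μ w
        ≤ ∑ u, x u * (if u ∈ S then 1 - T else 1) :=
          Finset.sum_le_sum fun u _ => hstep u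
      _ = ∑ u, (x u - (if u ∈ S then T * x u else 0)) := by
          refine Finset.sum_congr rfl fun u _ => ?_
          by_cases h : u ∈ S <;> simp [h] <;> ring
      _ = (∑ u, x u) - ∑ u, (if u ∈ S then T * x u else 0) := Finset.sum_sub_distrib _ _
      _ = 1 - T * ∑ u ∈ S, x u := by
          rw [Finset.sum_ite_mem, Finset.univ_inter, ← Finset.mul_sum, hx1]
  have hxS : ∑ u ∈ S, x u ≤ δ' / T := by
    rw [le_div_iff₀ hT]
    linarith only [hP, hPle]
  have hxA : 1 - 2*δ' - δ'/T ≤ ∑ u ∈ A'', x u := by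
    have hsplit := Finset.sum_filter_add_sum_filter_not V₀ (fun u => ∀ w ∈ B'', G.Adj u w) x
    have : ∑ u ∈ A'', x u + ∑ u ∈ S, x u = ∑ u ∈ V₀, x u := hsplit
    linarith
  have hcardA : r ≤ A''.card := by
    refine count A'' x (fun v _ => le_trans (le_add_of_nonneg_right (hμ0 v)) (hM v)) ?_
    linarith
  refine ⟨A'', B'', Finset.filter_subset _ _, Finset.filter_subset _ _, hcardA, hcardB, ?_⟩
  intro u hu v hv
  exact (Finset.mem_filter.mp hu).2 v hv

lemma biclique_arith1 (N R m e : ℝ) (hN2 : 2 ≤ N) (hR1 : 1 ≤ R) (hRN : R ≤ N)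
    (hm : m * N = 1) (hmpos : 0 < m)
    (he : e = 1/(2*N^8)) :
    (R-1)*((2*N+2+e)/(2*R*N)) ≤ 1 - m^2 + e := by
  have hepos : 0 < e := by rw [he]; positivity
  rw [mul_div_assoc', div_le_iff₀ (by nlinarith : (0:ℝ) < 2*R*N)]
  have h1 : R * m ≤ 1 := by nlinarith
  have h2 : m^2*(R*N) = R*m := by linear_combination R*m*hm
  nlinarith [mul_nonneg (mul_nonneg (by linarith : (0:ℝ) ≤ R) hepos.le)
    (by linarith : (0:ℝ) ≤ N - 1)]

lemma biclique_arith2 (m e δ' : ℝ) (hmpos : 0 < m) (hm2 : m ≤ 1/2)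
    (he : e = m^8/2) (hδ' : δ' = (2/m+2)*e + e^2) :
    2*δ' + δ'/(m^4) + e < m^2 := by
  subst he hδ'
  have h : (2/m+2)*(m^8/2) = m^7 + m^8 := by field_simp
  rw [h]
  have h2 : (m^7 + m^8 + (m^8/2)^2)/m^4 = m^3 + m^4 + m^12/4 := by
    field_simp; ring
  rw [h2]
  have hm1 : m ≤ 1 := by linarith
  have mono : ∀ k l : ℕ, k ≤ l → m^l ≤ m^k := fun k l h =>
    pow_le_pow_of_le_one hmpos.le hm1 h
  have b5 : m^5 ≤ 1/32 := by
    calc m^5 ≤ (1/2)^5 := pow_le_pow_left₀ hmpos.le hm2 5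
    _ = 1/32 := by norm_num
  have q3 : m^3 ≤ 1/2 * m^2 := by nlinarith [sq_nonneg m]
  have q4 : m^4 ≤ 1/4 * m^2 := by nlinarith [sq_nonneg m]
  have q7 : m^7 ≤ 1/32 * m^2 := by nlinarith [sq_nonneg m, b5]
  have q8 : m^8 ≤ 1/32 * m^2 := le_trans (mono 7 8 (by norm_num)) q7
  have q12 : m^12 ≤ 1/32 * m^2 := le_trans (mono 7 12 (by norm_num)) q7
  have q16 : m^16 ≤ 1/32 * m^2 := le_trans (mono 7 16 (by norm_num)) q7
  nlinarith [pow_pos hmpos 2]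

set_option maxHeartbeats 2000000 in
theorem biclique_soundness (ν : Type*) [Fintype ν] [DecidableEq ν]
    (G : SimpleGraph ν) [DecidableRel G.Adj]
    (V W : Finset ν) (hcover : ∀ a : ν, a ∈ V ∨ a ∈ W) (hdisj : Disjoint V W)
    (hbip : ∀ u v : ν, G.Adj u v → (u ∈ V ∧ v ∈ W) ∨ (u ∈ W ∧ v ∈ V))
    (n : ℕ) (hn : n = Fintype.card ν) (hn2 : 2 ≤ n)
    (r : ℕ) (hr1 : 1 ≤ r) (hrn : r ≤ n)
    (μ : ν → ℝ) (hμ : μ ∈ stdSimplex ℝ ν)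
    (hval : 1 - (2 * (n : ℝ) + 2) * (1 / (2 * (n : ℝ) ^ 8)) ≤
      nsVal ν (fun u v => if G.Adj u v then (1 : ℝ) else 0)
        (2 * (r : ℝ) * (n : ℝ) * (1 / (2 * (n : ℝ) ^ 8))) μ) :
    ∃ V'' W'' : Finset ν, V'' ⊆ V ∧ W'' ⊆ W ∧ r ≤ V''.card ∧ r ≤ W''.card ∧
      ∀ u ∈ V'', ∀ v ∈ W'', G.Adj u v := by
  have hνne : Nonempty ν := by
    rw [← Fintype.card_pos_iff, ← hn]; omega
  set N : ℝ := (n : ℝ) with hN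
  set R : ℝ := (r : ℝ) with hR
  have hN2 : (2:ℝ) ≤ N := by rw [hN]; exact_mod_cast hn2
  have hR1 : (1:ℝ) ≤ R := by rw [hR]; exact_mod_cast hr1
  have hRN : R ≤ N := by rw [hR, hN]; exact_mod_cast hrn
  have hNpos : (0:ℝ) < N := by linarith
  set e : ℝ := 1 / (2 * N ^ 8) with he
  set ρ : ℝ := 2 * R * N * e with hρ
  set δ' : ℝ := (2*N+2)*e + e^2 with hδ'
  set T : ℝ := 1 / N^4 with hT
  set M : ℝ := δ' / ρ with hM
  set m : ℝ := 1 / N with hm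
  clear_value N R e ρ δ' T M m
  have hNne : N ≠ 0 := hNpos.ne'
  have hN8 : (0:ℝ) < N^8 := pow_pos hNpos 8
  have hepos : 0 < e := by
    rw [he]; exact one_div_pos.mpr (by linarith)
  have hρpos : 0 < ρ := by
    rw [hρ]; exact mul_pos (by nlinarith : (0:ℝ) < 2*R*N) hepos
  have hδ'pos : 0 < δ' := by
    rw [hδ']
    nlinarith [mul_pos (show (0:ℝ) < 2*N+2 by linarith) hepos, sq_nonneg e]
  have hTpos : 0 < T := by
    rw [hT]; exact one_div_pos.mpr (pow_pos hNpos 4)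
  have hMpos : 0 < M := by
    rw [hM]; exact div_pos hδ'pos hρpos
  have hmpos : 0 < m := by
    rw [hm]; exact one_div_pos.mpr hNpos
  have hmne : m ≠ 0 := hmpos.ne'
  have hmN : m * N = 1 := by rw [hm]; exact one_div_mul_cancel hNne
  have hm2 : m ≤ 1/2 := by
    rw [hm]
    rw [div_le_div_iff₀ hNpos (by norm_num)]
    linarith
  have hem : e = m^8/2 := by
    rw [he, hm]
    field_simp
  have hδ'm : δ' = (2/m+2)*e + e^2 := by
    rw [hδ']
    have h2m : 2/m = 2*N := by
      rw [hm]; field_simp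
    rw [h2m]
  have hTm : T = m^4 := by rw [hT, hm]; field_simp
  -- key arithmetic facts
  have hMeq : M = (2*N+2+e)/(2*R*N) := by
    rw [hM, hδ', hρ]
    rw [div_eq_div_iff (by rw [← hρ]; exact hρpos.ne') (by nlinarith : (0:ℝ) < 2*R*N).ne']
    ring
  have hAB : (R-1)*M ≤ 1 - m^2 + e := by
    rw [hMeq]
    exact biclique_arith1 N R m e hN2 hR1 hRN hmN hmpos he
  have hC : 2*δ' + δ'/T + e < m^2 := by
    rw [hTm]
    exact biclique_arith2 m e δ' hmpos hm2 hem hδ'm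
  have hc2 : (R-1)*M < 1 - 2*δ' - δ'/T := by linarith
  have hNT : N*T = m^3 := by
    rw [hT, hm]; field_simp
  have hδ'T : N*T ≤ δ'/T := by
    rw [hNT, hTm, hδ'm, hem]
    have hcalc : ((2/m+2)*(m^8/2) + (m^8/2)^2)/m^4 = m^3 + m^4 + m^12/4 := by
      field_simp; ring
    rw [hcalc]
    linarith only [pow_pos hmpos 4, pow_pos hmpos 12]
  have hc1 : (R-1)*M < 1 - 2*δ' - N*T := by linarith
  have hδ'16 : δ' ≤ 1/16 := by
    rw [hδ'm, hem]
    have h : (2/m+2)*(m^8/2) = m^7 + m^8 := by field_simp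
    rw [h]
    have hm1 : m ≤ 1 := by linarith
    have mono : ∀ k l : ℕ, k ≤ l → m^l ≤ m^k := fun k l h =>
      pow_le_pow_of_le_one hmpos.le hm1 h
    have b7 : m^7 ≤ 1/128 := by
      calc m^7 ≤ (1/2)^7 := pow_le_pow_left₀ hmpos.le hm2 7
      _ = 1/128 := by norm_num
    have b8 : m^8 ≤ 1/128 := le_trans (mono 7 8 (by norm_num)) b7
    have b16 : m^16 ≤ 1/128 := le_trans (mono 7 16 (by norm_num)) b7
    have hsq : (m^8/2)^2 = m^16/4 := by ring
    linarith
  -- facts about μ and the simplex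
  obtain ⟨hμ0, hμ1⟩ := hμ
  have hP1 : ∀ x : ν → ℝ, x ∈ stdSimplex ℝ ν →
      (∑ v : ν, ∑ w : ν, x v * (if G.Adj v w then (1:ℝ) else 0) * μ w) ≤ 1 := by
    intro x ⟨hx0, hx1⟩
    calc ∑ v : ν, ∑ w : ν, x v * (if G.Adj v w then (1:ℝ) else 0) * μ w
        ≤ ∑ v : ν, ∑ w : ν, x v * μ w := by
          refine Finset.sum_le_sum fun v _ => Finset.sum_le_sum fun w _ => ?_
          by_cases h : G.Adj v w
          · simp [h]
          · simp [h]; exact mul_nonneg (hx0 v) (hμ0 w)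
      _ = (∑ v : ν, x v) * (∑ w : ν, μ w) := (Finset.sum_mul_sum _ _ _ _).symm
      _ = 1 := by rw [hx1, hμ1, mul_one]
  have hsup0 : ∀ x : ν → ℝ, x ∈ stdSimplex ℝ ν → 0 ≤ ⨆ v : ν, (x v + μ v) := by
    intro x ⟨hx0, hx1⟩
    obtain ⟨v₀⟩ := hνne
    exact le_trans (add_nonneg (hx0 v₀) (hμ0 v₀))
      (le_ciSup (f := fun v => x v + μ v) (Finite.bddAbove_range _) v₀)
  set Sv := {t : ℝ | ∃ x ∈ stdSimplex ℝ ν,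
    t = (∑ v : ν, ∑ w : ν, x v * (if G.Adj v w then (1:ℝ) else 0) * μ w)
      - ρ * ⨆ v : ν, (x v + μ v)} with hSv
  have hSvne : Sv.Nonempty := ⟨_, μ, ⟨hμ0, hμ1⟩, rfl⟩
  have hSvbdd : BddAbove Sv := by
    refine ⟨1, ?_⟩
    rintro t ⟨x, hx, rfl⟩
    have h1 := hP1 x hx
    have h2 := hsup0 x hx
    have h3 : 0 ≤ ρ * ⨆ v : ν, (x v + μ v) := mul_nonneg hρpos.le h2
    linarith only [h1, h3]
  have hval' : 1 - (2*N+2)*e ≤ sSup Sv := by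
    unfold nsVal at hval
    exact hval
  obtain ⟨t, htS, htgt⟩ := exists_lt_of_lt_csSup hSvne
    (show sSup Sv - e^2 < sSup Sv by linarith only [pow_pos hepos 2])
  obtain ⟨x, hxmem, rfl⟩ := htS
  obtain ⟨hx0, hx1⟩ := hxmem
  have hxmem' : x ∈ stdSimplex ℝ ν := ⟨hx0, hx1⟩
  set P : ℝ := ∑ v : ν, ∑ w : ν, x v * (if G.Adj v w then (1:ℝ) else 0) * μ w with hPdef
  have hPle1 : P ≤ 1 := hP1 x hxmem'
  have htlb : 1 - δ' ≤ P - ρ * ⨆ v : ν, (x v + μ v) := by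
    rw [hδ']
    linarith only [htgt, hval']
  have hsupnn := hsup0 x hxmem'
  have hPlb : 1 - δ' ≤ P := by
    linarith only [htlb, mul_nonneg hρpos.le hsupnn]
  have hρM : ρ * (⨆ v : ν, (x v + μ v)) ≤ δ' := by
    linarith only [htlb, hPle1]
  have hMbd : ∀ v : ν, x v + μ v ≤ M := by
    intro v
    have h1 : x v + μ v ≤ ⨆ v : ν, (x v + μ v) :=
      le_ciSup (f := fun v => x v + μ v) (Finite.bddAbove_range _) v
    have h2 : ⨆ v : ν, (x v + μ v) ≤ M := by
      rw [hM, le_div_iff₀ hρpos]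
      calc (⨆ v : ν, (x v + μ v)) * ρ = ρ * (⨆ v : ν, (x v + μ v)) := mul_comm _ _
        _ ≤ δ' := hρM
    linarith
  -- partition facts
  have hpart : ∀ f : ν → ℝ, ∑ v ∈ V, f v + ∑ v ∈ W, f v = ∑ v, f v := by
    intro f
    have huniv : V ∪ W = Finset.univ := by
      ext a; simpa using hcover a
    rw [← Finset.sum_union hdisj, huniv]
  set a : ℝ := ∑ v ∈ V, x v with ha
  set b : ℝ := ∑ v ∈ V, μ v with hb
  have haW : ∑ v ∈ W, x v = 1 - a := by
    have := hpart x; rw [hx1] at this; linarith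
  have hbW : ∑ v ∈ W, μ v = 1 - b := by
    have := hpart μ; rw [hμ1] at this; linarith
  have ha0 : 0 ≤ a := Finset.sum_nonneg fun v _ => hx0 v
  have hb0 : 0 ≤ b := Finset.sum_nonneg fun v _ => hμ0 v
  have ha1 : a ≤ 1 := by
    have h0 : 0 ≤ ∑ v ∈ W, x v := Finset.sum_nonneg fun v _ => hx0 v
    linarith [haW]
  have hb1 : b ≤ 1 := by
    have h0 : 0 ≤ ∑ v ∈ W, μ v := Finset.sum_nonneg fun v _ => hμ0 v
    linarith [hbW]
  -- bipartite bound : P ≤ a(1-b)+(1-a)b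
  have hinner : ∀ (X : Finset ν) (v : ν), v ∈ X → (∀ u w, G.Adj u w → u ∈ X → w ∉ X) →
      ∑ w, x v * (if G.Adj v w then (1:ℝ) else 0) * μ w ≤ x v * ∑ w ∈ Xᶜ, μ w := by
    intro X v hvX hX
    have step : ∀ w : ν, x v * (if G.Adj v w then (1:ℝ) else 0) * μ w ≤
        (if w ∈ Xᶜ then x v * μ w else 0) := by
      intro w
      by_cases h : G.Adj v w
      · have hwX : w ∈ Xᶜ := Finset.mem_compl.mpr (hX v w h hvX)
        simp [h, hwX]
      · have : x v * (if G.Adj v w then (1:ℝ) else 0) * μ w = 0 := by simp [h]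
        rw [this]
        by_cases h2 : w ∈ Xᶜ
        · simp [h2]; exact mul_nonneg (hx0 v) (hμ0 w)
        · simp [h2]
    calc ∑ w, x v * (if G.Adj v w then (1:ℝ) else 0) * μ w
        ≤ ∑ w, (if w ∈ Xᶜ then x v * μ w else 0) := Finset.sum_le_sum fun w _ => step w
      _ = ∑ w ∈ Xᶜ, x v * μ w := by rw [Finset.sum_ite_mem, Finset.univ_inter]
      _ = x v * ∑ w ∈ Xᶜ, μ w := by rw [Finset.mul_sum]
  have hVc : ∀ f : ν → ℝ, ∑ w ∈ Vᶜ, f w = ∑ w ∈ W, f w := by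
    intro f
    congr 1
    ext w
    simp only [Finset.mem_compl]
    constructor
    · intro hw; exact (hcover w).resolve_left hw
    · intro hw; exact Finset.disjoint_right.mp hdisj hw
  have hWc : ∀ f : ν → ℝ, ∑ w ∈ Wᶜ, f w = ∑ w ∈ V, f w := by
    intro f
    congr 1
    ext w
    simp only [Finset.mem_compl]
    constructor
    · intro hw; exact (hcover w).resolve_right hw
    · intro hw; exact Finset.disjoint_left.mp hdisj hw
  have hPab : P ≤ a*(1-b) + (1-a)*b := by
    have hsplit : P = ∑ v ∈ V, (∑ w, x v * (if G.Adj v w then (1:ℝ) else 0) * μ w)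
        + ∑ v ∈ W, (∑ w, x v * (if G.Adj v w then (1:ℝ) else 0) * μ w) :=
      (hpart _).symm
    have hVside : ∑ v ∈ V, (∑ w, x v * (if G.Adj v w then (1:ℝ) else 0) * μ w)
        ≤ a * (1-b) := by
      calc ∑ v ∈ V, (∑ w, x v * (if G.Adj v w then (1:ℝ) else 0) * μ w)
          ≤ ∑ v ∈ V, x v * ∑ w ∈ Vᶜ, μ w := by
            refine Finset.sum_le_sum fun v hv => hinner V v hv ?_
            intro u w hadj huV
            rcases hbip u w hadj with ⟨_, hwW⟩ | ⟨huW, _⟩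
            · exact Finset.disjoint_right.mp hdisj hwW
            · exact absurd huV (Finset.disjoint_right.mp hdisj huW)
        _ = a * (1-b) := by
            rw [hVc μ, hbW, ← Finset.sum_mul]
    have hWside : ∑ v ∈ W, (∑ w, x v * (if G.Adj v w then (1:ℝ) else 0) * μ w)
        ≤ (1-a) * b := by
      calc ∑ v ∈ W, (∑ w, x v * (if G.Adj v w then (1:ℝ) else 0) * μ w)
          ≤ ∑ v ∈ W, x v * ∑ w ∈ Wᶜ, μ w := by
            refine Finset.sum_le_sum fun v hv => hinner W v hv ?_
            intro u w hadj huW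
            rcases hbip u w hadj with ⟨huV, _⟩ | ⟨_, hwV⟩
            · exact absurd huW (Finset.disjoint_left.mp hdisj huV)
            · exact Finset.disjoint_left.mp hdisj hwV
        _ = (1-a) * b := by
            rw [hWc μ, ← Finset.sum_mul, haW]
    linarith
  have hquad : a*b + (1-a)*(1-b) ≤ δ' := by
    have hid : a*b + (1-a)*(1-b) = 1 - (a*(1-b) + (1-a)*b) := by ring
    linarith only [hPab, hPlb, hid]
  have hcard : Fintype.card ν ≤ n := le_of_eq hn.symm
  -- case split
  rcases le_or_gt (1/2 : ℝ) a with hca | hca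
  · -- x concentrated on V, μ on W
    have h1b : 0 ≤ (1-a)*(1-b) := mul_nonneg (by linarith only [ha1]) (by linarith only [hb1])
    have hab : a*b ≤ δ' := by linarith only [hquad, h1b]
    have hp1 : (1/2)*b ≤ a*b := mul_le_mul_of_nonneg_right hca hb0
    have hbsmall : b ≤ 2*δ' := by linarith only [hab, hp1]
    have habnn : 0 ≤ a*b := mul_nonneg ha0 hb0
    have h1ab : (1-a)*(1-b) ≤ δ' := by linarith only [hquad, habnn]
    have hp2 : (1/2)*(1-a) ≤ (1-b)*(1-a) :=
      mul_le_mul_of_nonneg_right (by linarith only [hbsmall, hδ'16]) (by linarith only [ha1])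
    have h1a : 1 - a ≤ 2*δ' := by linarith only [h1ab, hp2]
    have hxV : 1 - 2*δ' ≤ ∑ v ∈ V, x v := by rw [← ha]; linarith
    have hμW : 1 - 2*δ' ≤ ∑ v ∈ W, μ v := by rw [hbW]; linarith
    obtain ⟨A, B, hAV, hBW, hcA, hcB, hadj⟩ :=
      biclique_extract G V W n r hcard x μ hx0 hx1 hμ0 hμ1 δ' M T hTpos hMpos
        hMbd hxV hμW hPlb (by rw [← hN, ← hR]; exact hc1) (by rw [← hR]; exact hc2)
    exact ⟨A, B, hAV, hBW, hcA, hcB, hadj⟩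
  · -- x concentrated on W, μ on V
    have habnn : 0 ≤ a*b := mul_nonneg ha0 hb0
    have h1ab : (1-a)*(1-b) ≤ δ' := by linarith only [hquad, habnn]
    have hp1 : (1/2)*(1-b) ≤ (1-a)*(1-b) :=
      mul_le_mul_of_nonneg_right (by linarith only [hca]) (by linarith only [hb1])
    have h1bsmall : 1 - b ≤ 2*δ' := by linarith only [h1ab, hp1]
    have h1bnn : 0 ≤ (1-a)*(1-b) := mul_nonneg (by linarith only [ha1]) (by linarith only [hb1])
    have hab : a*b ≤ δ' := by linarith only [hquad, h1bnn]
    have hp2 : (1/2)*a ≤ b*a :=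
      mul_le_mul_of_nonneg_right (by linarith only [h1bsmall, hδ'16]) ha0
    have hasmall : a ≤ 2*δ' := by linarith only [hab, hp2]
    have hxW : 1 - 2*δ' ≤ ∑ v ∈ W, x v := by rw [haW]; linarith
    have hμV : 1 - 2*δ' ≤ ∑ v ∈ V, μ v := by rw [← hb]; linarith
    obtain ⟨A, B, hAW, hBV, hcA, hcB, hadj⟩ :=
      biclique_extract G W V n r hcard x μ hx0 hx1 hμ0 hμ1 δ' M T hTpos hMpos
        hMbd hxW hμV hPlb (by rw [← hN, ← hR]; exact hc1) (by rw [← hR]; exact hc2)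
    exact ⟨B, A, hBV, hAW, hcB, hcA, fun u hu v hv => (hadj v hv u hu).symm⟩
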